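/- Let I : X → [0,∞], H̃ : X → ℝ^σ, s(u) = -inf{I(x) : H̃(x) = u}, g : ℝ^σ → ℝ continuous, and φ_g(β) = inf_{y} {I(y) + ⟨β,H̃(y)⟩ + g(H̃(y))}. Define 𝓔^u = {x : H̃(x) = u and I(x) = -s(u)} and 𝓔(g)_β = {x : I(x) + ⟨β,H̃(x)⟩ + g(H̃(x)) = φ_g(β)}. If s - g has a strictly supporting hyperplane at u ∈ dom s with normal vector [β,-1], i.e., s(v) - g(v) < s(u) - g(u) + ⟨β, v-u⟩ for all v ≠ u, then 𝓔^u = 𝓔(g)_β. -/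

import Mathlib

open scoped RealInnerProductSpace

/-- The microcanonical entropy `s(u) = -inf{I(x) : H̃(x) = u}`. -/
noncomputable def microEntropy {σ : ℕ} {X : Type*} (I : X → EReal)
    (H : X → EuclideanSpace ℝ (Fin σ)) (u : EuclideanSpace ℝ (Fin σ)) : EReal :=
  -sInf (I '' {x | H x = u})

/-- The set `𝓔^u` of microcanonical equilibrium macrostates: minimizers of `I`
subject to `H̃(x) = u`. -/
def microEquilibrium {σ : ℕ} {X : Type*} (I : X → EReal)
    (H : X → EuclideanSpace ℝ (Fin σ)) (u : EuclideanSpace ℝ (Fin σ)) : Set X :=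
  {x | H x = u ∧ ∀ y, H y = u → I x ≤ I y}

/-- The set `𝓔(g)_β` of generalized canonical equilibrium macrostates: minimizers
of `I(x) + ⟨β, H̃(x)⟩ + g(H̃(x))`. -/
def genCanonEquilibrium {σ : ℕ} {X : Type*} (I : X → EReal)
    (H : X → EuclideanSpace ℝ (Fin σ)) (g : EuclideanSpace ℝ (Fin σ) → ℝ)
    (β : EuclideanSpace ℝ (Fin σ)) : Set X :=
  {x | ∀ y, I x + ((⟪β, H x⟫ + g (H x) : ℝ) : EReal) ≤
    I y + ((⟪β, H y⟫ + g (H y) : ℝ) : EReal)}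

/-- if `s - g` has a strictly supporting hyperplane at `u ∈ dom s`
with normal vector `[β, -1]`, then `𝓔^u = 𝓔(g)_β` (full equivalence). -/
theorem full_equivalence_of_strictly_supporting
    (σ : ℕ) (X : Type*) [MetricSpace X]
    (I : X → EReal) (hIpos : ∀ x, 0 ≤ I x) (hIlsc : LowerSemicontinuous I)
    (hIcpt : ∀ c : ℝ, IsCompact {x | I x ≤ ((c : ℝ) : EReal)})
    (H : X → EuclideanSpace ℝ (Fin σ)) (hH : Continuous H)
    (hHb : ∃ C : ℝ, ∀ x, ‖H x‖ ≤ C)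
    (g : EuclideanSpace ℝ (Fin σ) → ℝ) (hg : Continuous g)
    (u β : EuclideanSpace ℝ (Fin σ)) (hu : microEntropy I H u ≠ ⊥)
    (hsupp : ∀ v, v ≠ u →
      microEntropy I H v - ((g v : ℝ) : EReal) <
        microEntropy I H u - ((g u : ℝ) : EReal) + ((⟪β, v - u⟫ : ℝ) : EReal)) :
    microEquilibrium I H u = genCanonEquilibrium I H g β := by
  classical
  set S : EReal := sInf (I '' {x | H x = u}) with hS
  -- S is finite
  have hS_ne_top : S ≠ ⊤ := by
    intro h
    apply hu
    simp [microEntropy, ← hS, h]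
  have hS_ne_bot : S ≠ ⊥ := by
    intro h
    have h0 : (0 : EReal) ≤ S := le_sInf (by rintro b ⟨x, -, rfl⟩; exact hIpos x)
    rw [h] at h0
    exact absurd h0 (by simp)
  obtain ⟨m, hm⟩ : ∃ m : ℝ, S = (m : EReal) :=
    ⟨S.toReal, (EReal.coe_toReal hS_ne_top hS_ne_bot).symm⟩
  have hsu : microEntropy I H u = ((-m : ℝ) : EReal) := by
    simp [microEntropy, ← hS, hm, ← EReal.coe_neg]
  -- the infimum bound: m ≤ I y for H y = u
  have hmle : ∀ y, H y = u → (m : EReal) ≤ I y := by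
    intro y hy
    rw [← hm]
    exact sInf_le ⟨y, hy, rfl⟩
  set c : ℝ := ⟪β, u⟫ + g u with hc
  -- strict bound for H y ≠ u
  have hstrict : ∀ y, H y ≠ u →
      ((m + c : ℝ) : EReal) < I y + ((⟪β, H y⟫ + g (H y) : ℝ) : EReal) := by
    intro y hy
    set v := H y with hv
    have h1 := hsupp v hy
    rw [hsu] at h1
    have hrhs : (((-m : ℝ)) : EReal) - ((g u : ℝ) : EReal) + ((⟪β, v - u⟫ : ℝ) : EReal)
        = ((-m - g u + ⟪β, v - u⟫ : ℝ) : EReal) := by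
      norm_cast
    rw [hrhs] at h1
    -- microEntropy v - g v < r, so -(r + g v) < sInf over v
    have h2 : microEntropy I H v < ((-m - g u + ⟪β, v - u⟫ + g v : ℝ) : EReal) := by
      have := EReal.add_lt_add_right_coe h1 (g v)
      rwa [EReal.sub_add_cancel, ← EReal.coe_add] at this
    have h3 : ((-(-m - g u + ⟪β, v - u⟫ + g v) : ℝ) : EReal) < sInf (I '' {x | H x = v}) := by
      rw [EReal.coe_neg, EReal.neg_lt_comm]
      exact h2
    have h4 : ((-(-m - g u + ⟪β, v - u⟫ + g v) : ℝ) : EReal) < I y :=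
      lt_of_lt_of_le h3 (sInf_le ⟨y, rfl, rfl⟩)
    have h5 := EReal.add_lt_add_right_coe h4 (⟪β, v⟫ + g v)
    have hcalc : -(-m - g u + ⟪β, v - u⟫ + g v) + (⟪β, v⟫ + g v) = m + c := by
      simp only [inner_sub_right, hc]
      ring
    rw [← EReal.coe_add, hcalc] at h5
    exact h5
  ext x
  constructor
  · rintro ⟨hxu, hxmin⟩
    -- x is a minimizer: I x ≤ m
    have hxm : I x ≤ (m : EReal) := by
      rw [← hm]
      exact le_sInf (by rintro b ⟨z, hz, rfl⟩; exact hxmin z hz)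
    intro y
    rw [hxu]
    by_cases hy : H y = u
    · rw [hy]
      exact add_le_add_left (hxmin y hy) _
    · calc I x + ((⟪β, u⟫ + g u : ℝ) : EReal) ≤ (m : EReal) + ((⟪β, u⟫ + g u : ℝ) : EReal) :=
            add_le_add_left hxm _
        _ = ((m + c : ℝ) : EReal) := by rw [← EReal.coe_add, hc]
        _ ≤ I y + ((⟪β, H y⟫ + g (H y) : ℝ) : EReal) := (hstrict y hy).le
  · intro hx
    -- first, F x ≤ m + c
    have hFx : I x + ((⟪β, H x⟫ + g (H x) : ℝ) : EReal) ≤ ((m + c : ℝ) : EReal) := by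
      have h1 : I x + ((⟪β, H x⟫ + g (H x) : ℝ) : EReal) - ((c : ℝ) : EReal)
          ≤ (m : EReal) := by
        rw [← hm]
        apply le_sInf
        rintro b ⟨z, hz, rfl⟩
        have := hx z
        rw [hz] at this
        rw [EReal.sub_le_iff_le_add (by simp) (by simp)]
        calc I x + ((⟪β, H x⟫ + g (H x) : ℝ) : EReal)
            ≤ I z + ((⟪β, u⟫ + g u : ℝ) : EReal) := this
          _ = I z + ((c : ℝ) : EReal) := by rw [hc]
      rw [EReal.sub_le_iff_le_add (by simp) (by simp)] at h1
      calc I x + ((⟪β, H x⟫ + g (H x) : ℝ) : EReal) ≤ (m : EReal) + ((c : ℝ) : EReal) := h1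
        _ = ((m + c : ℝ) : EReal) := by rw [← EReal.coe_add]
    have hxu : H x = u := by
      by_contra hne
      exact absurd hFx (not_le.mpr (hstrict x hne))
    refine ⟨hxu, fun y hy => ?_⟩
    have := hx y
    rw [hxu, hy] at this
    exact (EReal.addLECancellable_coe _).add_le_add_iff_right.mp this
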